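/- Let K be a convex body in ℝⁿ and let E(θ) = c + (cos θ)·u + (sin θ)·v be an ellipse inscribed in K (u, v linearly independent). Then E is NOT a-maximal for K if and only if there exist a unit vector v₀ ∈ ℝⁿ and δ > 0 such that E(θ) + s·v₀ ∈ int K for all θ ∈ ℝ and all s with 0 < s < δ. -/

import Mathlib

/-- A convex body in ℝⁿ: a compact convex set with nonempty interior. -/
def IsConvexBody {n : ℕ} (K : Set (EuclideanSpace ℝ (Fin n))) : Prop :=
  IsCompact K ∧ Convex ℝ K ∧ (interior K).Nonempty

/-- The parametrized ellipse `θ ↦ c + (cos θ)•u + (sin θ)•v` is inscribed in `K`. -/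
def EllipseInscribed {n : ℕ} (K : Set (EuclideanSpace ℝ (Fin n)))
    (c u v : EuclideanSpace ℝ (Fin n)) : Prop :=
  ∀ θ : ℝ, c + (Real.cos θ) • u + (Real.sin θ) • v ∈ K

/-- The inscribed ellipse `θ ↦ c + (cos θ)•u + (sin θ)•v` is `a`-maximal for `K`:
no dilated copy (ratio `ρ > 1`, same orientation and eccentricity) is inscribed in `K`. -/
def AMaximal {n : ℕ} (K : Set (EuclideanSpace ℝ (Fin n)))
    (c u v : EuclideanSpace ℝ (Fin n)) : Prop :=
  ¬ ∃ (ρ : ℝ) (c' : EuclideanSpace ℝ (Fin n)), 1 < ρ ∧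
      ∀ θ : ℝ, c' + ρ • ((Real.cos θ) • u + (Real.sin θ) • v) ∈ K

set_option maxHeartbeats 800000 in
/-- An inscribed ellipse fails to be a-maximal iff all small translates in some unit
direction lie entirely in the interior of K. -/
theorem stmt_2 {n : ℕ} (hn : 1 ≤ n) (K : Set (EuclideanSpace ℝ (Fin n)))
    (hK : IsConvexBody K) (c u v : EuclideanSpace ℝ (Fin n))
    (huv : LinearIndependent ℝ ![u, v]) (hins : EllipseInscribed K c u v) :
    ¬ AMaximal K c u v ↔
      ∃ v₀ : EuclideanSpace ℝ (Fin n), ‖v₀‖ = 1 ∧ ∃ δ : ℝ, 0 < δ ∧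
        ∀ θ s : ℝ, 0 < s → s < δ →
          c + (Real.cos θ) • u + (Real.sin θ) • v + s • v₀ ∈ interior K := by
  obtain ⟨hKc, hKconv, hKint⟩ := hK
  constructor
  · intro hna
    obtain ⟨ρ, c', hρ, hbig⟩ := not_not.mp hna
    have hρ0 : (0 : ℝ) < ρ := lt_trans one_pos hρ
    have hρi0 : (0 : ℝ) < ρ⁻¹ := inv_pos.mpr hρ0
    have hρi1 : ρ⁻¹ < 1 := inv_lt_one_of_one_lt₀ hρ
    -- For any interior point x, the translated unit-size ellipse lies in the interior.
    have hkey : ∀ x ∈ interior K, ∀ θ : ℝ,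
        (ρ⁻¹ • c' + (1 - ρ⁻¹) • x) + Real.cos θ • u + Real.sin θ • v ∈ interior K := by
      intro x hx θ
      have h1 : (1 - ρ⁻¹) • x + ρ⁻¹ • (c' + ρ • (Real.cos θ • u + Real.sin θ • v))
          = (ρ⁻¹ • c' + (1 - ρ⁻¹) • x) + Real.cos θ • u + Real.sin θ • v := by
        have hr : ρ⁻¹ • (ρ • (Real.cos θ • u + Real.sin θ • v))
            = Real.cos θ • u + Real.sin θ • v := by
          rw [smul_smul, inv_mul_cancel₀ (ne_of_gt hρ0), one_smul]
        rw [smul_add, hr]; abel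
      rw [← h1]
      exact hKconv.combo_interior_self_mem_interior hx (hbig θ)
        (by linarith) (le_of_lt hρi0) (by ring)
    -- Find an interior point x whose associated center differs from c.
    obtain ⟨x₀, hx₀⟩ := hKint
    have hex : ∃ c₁, c₁ ≠ c ∧ ∀ θ : ℝ,
        c₁ + Real.cos θ • u + Real.sin θ • v ∈ interior K := by
      by_cases hc : ρ⁻¹ • c' + (1 - ρ⁻¹) • x₀ = c
      · obtain ⟨ε, hε, hball⟩ := Metric.isOpen_iff.mp isOpen_interior x₀ hx₀
        set e : EuclideanSpace ℝ (Fin n) :=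
          EuclideanSpace.single (⟨0, by omega⟩ : Fin n) (1 : ℝ) with he_def
        have he : ‖e‖ = 1 := by
          rw [he_def, EuclideanSpace.norm_single]; simp
        have he0 : e ≠ 0 := by
          intro h; rw [h] at he; simp at he
        set x₁ := x₀ + (ε / 2) • e with hx₁def
        have hx₁ : x₁ ∈ interior K := by
          apply hball
          rw [Metric.mem_ball, hx₁def]
          have : dist (x₀ + (ε / 2) • e) x₀ = ‖(ε / 2) • e‖ := by
            rw [dist_eq_norm]; congr 1; abel
          rw [this, norm_smul, he]
          simp only [mul_one, Real.norm_eq_abs]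
          rw [abs_of_pos (by linarith)]; linarith
        refine ⟨ρ⁻¹ • c' + (1 - ρ⁻¹) • x₁, ?_, hkey x₁ hx₁⟩
        intro hcontra
        have : ρ⁻¹ • c' + (1 - ρ⁻¹) • x₁
            = (ρ⁻¹ • c' + (1 - ρ⁻¹) • x₀) + ((1 - ρ⁻¹) * (ε / 2)) • e := by
          rw [hx₁def, smul_add, smul_smul]; abel
        rw [this, hc] at hcontra
        have h2 : ((1 - ρ⁻¹) * (ε / 2)) • e = 0 := by
          have := hcontra
          rwa [add_eq_left] at this
        rcases smul_eq_zero.mp h2 with h | h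
        · exact absurd h (ne_of_gt (mul_pos (by linarith) (by linarith)))
        · exact he0 h
      · exact ⟨ρ⁻¹ • c' + (1 - ρ⁻¹) • x₀, hc, hkey x₀ hx₀⟩
    obtain ⟨c₁, hne, hE₁⟩ := hex
    set w := c₁ - c with hw_def
    have hw : w ≠ 0 := sub_ne_zero.mpr hne
    have hwn : (0 : ℝ) < ‖w‖ := norm_pos_iff.mpr hw
    refine ⟨‖w‖⁻¹ • w, ?_, ‖w‖, hwn, ?_⟩
    · rw [norm_smul, norm_inv, norm_norm, inv_mul_cancel₀ (ne_of_gt hwn)]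
    · intro θ s hs hsδ
      set t := s / ‖w‖ with ht_def
      have ht0 : 0 < t := div_pos hs hwn
      have ht1 : t < 1 := (div_lt_one hwn).mpr hsδ
      have heq : c + Real.cos θ • u + Real.sin θ • v + s • (‖w‖⁻¹ • w)
          = t • (c₁ + Real.cos θ • u + Real.sin θ • v)
            + (1 - t) • (c + Real.cos θ • u + Real.sin θ • v) := by
        have hsw : s • (‖w‖⁻¹ • w) = t • w := by
          rw [smul_smul, ht_def, div_eq_mul_inv]
        rw [hsw, hw_def]
        simp only [smul_sub, smul_add, sub_smul, one_smul]
        abel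
      rw [heq]
      exact hKconv.combo_interior_self_mem_interior (hE₁ θ) (hins θ) ht0
        (by linarith) (by ring)
  · rintro ⟨v₀, hv₀, δ, hδ, hmem⟩
    -- The translated ellipse at s = δ/2 lies in the interior.
    set c'' := c + (δ / 2) • v₀ with hc''
    have hE'' : ∀ θ : ℝ, c'' + Real.cos θ • u + Real.sin θ • v ∈ interior K := by
      intro θ
      have := hmem θ (δ / 2) (by linarith) (by linarith)
      have heq : c + Real.cos θ • u + Real.sin θ • v + (δ / 2) • v₀
          = c'' + Real.cos θ • u + Real.sin θ • v := by
        rw [hc'']; abel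
      rwa [heq] at this
    -- A compact set containing the translated ellipse, inside the open interior.
    set f : ℝ → EuclideanSpace ℝ (Fin n) :=
      fun θ => c'' + Real.cos θ • u + Real.sin θ • v with hf
    have hfc : Continuous f := by
      apply Continuous.add
      apply Continuous.add continuous_const
      · exact Real.continuous_cos.smul continuous_const
      · exact Real.continuous_sin.smul continuous_const
    set T : Set (EuclideanSpace ℝ (Fin n)) := f '' Set.Icc 0 (2 * Real.pi) with hT
    have hTc : IsCompact T := (isCompact_Icc).image hfc
    have hTsub : T ⊆ interior K := by
      rintro x ⟨θ, _, rfl⟩; exact hE'' θ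
    obtain ⟨ε, hε, hthick⟩ := hTc.exists_thickening_subset_open isOpen_interior hTsub
    set M : ℝ := ‖u‖ + ‖v‖ + 1 with hM
    have hM0 : (0 : ℝ) < M := by positivity
    refine not_not.mpr ⟨1 + ε / M, c'', by nlinarith [div_pos hε hM0], ?_⟩
    intro θ
    -- find φ ∈ [0, 2π] with the same cos and sin
    set k : ℤ := ⌊θ / (2 * Real.pi)⌋ with hk
    set φ : ℝ := θ - k * (2 * Real.pi) with hφ
    have hpi : (0 : ℝ) < 2 * Real.pi := by positivity
    have hfr0 : (0 : ℝ) ≤ θ / (2 * Real.pi) - k := by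
      rw [hk]; exact sub_nonneg.mpr (Int.floor_le _)
    have hfr1 : θ / (2 * Real.pi) - k < 1 := by
      rw [hk]; have := Int.lt_floor_add_one (θ / (2 * Real.pi)); linarith
    have hφmem : φ ∈ Set.Icc 0 (2 * Real.pi) := by
      constructor
      · have : (0:ℝ) ≤ (θ / (2 * Real.pi) - k) * (2 * Real.pi) := by positivity
        rw [hφ]
        have heq : (θ / (2 * Real.pi) - k) * (2 * Real.pi) = θ - k * (2 * Real.pi) := by
          field_simp
        linarith [heq ▸ this]
      · have h1 : (θ / (2 * Real.pi) - k) * (2 * Real.pi) ≤ 1 * (2 * Real.pi) := by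
          apply mul_le_mul_of_nonneg_right (le_of_lt hfr1) (le_of_lt hpi)
        have heq : (θ / (2 * Real.pi) - k) * (2 * Real.pi) = θ - k * (2 * Real.pi) := by
          field_simp
        rw [hφ]; linarith [heq ▸ h1]
    have hcos : Real.cos φ = Real.cos θ := by
      rw [hφ]; exact Real.cos_sub_int_mul_two_pi θ k
    have hsin : Real.sin φ = Real.sin θ := by
      rw [hφ, ← neg_sub (k * (2 * Real.pi)) θ, Real.sin_neg,
        Real.sin_int_mul_two_pi_sub, neg_neg]
    have hfφT : f φ ∈ T := ⟨φ, hφmem, rfl⟩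
    have hdist : dist (c'' + (1 + ε / M) • (Real.cos θ • u + Real.sin θ • v)) (f φ) < ε := by
      rw [hf]
      simp only
      rw [hcos, hsin, dist_eq_norm]
      have heq : c'' + (1 + ε / M) • (Real.cos θ • u + Real.sin θ • v)
          - (c'' + Real.cos θ • u + Real.sin θ • v)
          = (ε / M) • (Real.cos θ • u + Real.sin θ • v) := by
        simp only [add_smul, one_smul, smul_add]; abel
      rw [heq, norm_smul]
      have hb : ‖Real.cos θ • u + Real.sin θ • v‖ ≤ ‖u‖ + ‖v‖ := by
        refine (norm_add_le _ _).trans ?_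
        rw [norm_smul, norm_smul, Real.norm_eq_abs, Real.norm_eq_abs]
        have h1 : |Real.cos θ| * ‖u‖ ≤ 1 * ‖u‖ :=
          mul_le_mul_of_nonneg_right (Real.abs_cos_le_one θ) (norm_nonneg u)
        have h2 : |Real.sin θ| * ‖v‖ ≤ 1 * ‖v‖ :=
          mul_le_mul_of_nonneg_right (Real.abs_sin_le_one θ) (norm_nonneg v)
        rw [one_mul] at h1 h2
        linarith
      have hεM : ‖(ε / M : ℝ)‖ = ε / M := by
        rw [Real.norm_eq_abs, abs_of_pos (div_pos hε hM0)]
      rw [hεM]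
      calc ε / M * ‖Real.cos θ • u + Real.sin θ • v‖
          ≤ ε / M * (‖u‖ + ‖v‖) := by
            apply mul_le_mul_of_nonneg_left hb (le_of_lt (div_pos hε hM0))
        _ < ε := by
            rw [div_mul_eq_mul_div, div_lt_iff₀ hM0]
            nlinarith [norm_nonneg u, norm_nonneg v]
    have : c'' + (1 + ε / M) • (Real.cos θ • u + Real.sin θ • v) ∈
        Metric.thickening ε T := by
      rw [Metric.mem_thickening_iff]
      exact ⟨f φ, hfφT, hdist⟩
    exact interior_subset (hthick this)
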